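/- Let q > 1 be a real number, ε ∈ {1, -1}, and let α be a complex number with α² ≠ 1 and q^{-3/2} < |α| < q^{3/2}. Set A = (1 - α⁻²q⁻¹)/(1 - α⁻²) and B = (1 - α²q⁻¹)/(1 - α²), and define Z₁ = Σ_{n ∈ ℤ} (q^{-4|n|-2} - q^{-2|n|-2|n-1|-2}), Z₂ = (q⁻² - q⁻⁴) Σ_{m=1}^{∞} ε^m q^{-3m/2} (α^m A + α^{-m} B), Z₃ = (q⁻² - q⁻⁴) Σ_{n=1}^{∞} Σ_{m=n+1}^{∞} ε^{n+m} q^{-5n/2 - 3m/2} (α^{m-n} A + α^{n-m} B), and Z₄ = (q⁻² - 1) Σ_{m=1}^{∞} Σ_{n=m+1}^{∞} ε^{n+m} q^{-3n/2 - 5m/2} (α^{n-m} A + α^{-n+m} B). Then all the series converge absolutely and Z₁ + Z₂ + Z₃ + Z₄ = q⁻² (1 - q⁻²)² (1 - ε α q^{-3/2})⁻¹ (1 - ε α⁻¹ q^{-3/2})⁻¹. -/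

import Mathlib

open MeasureTheory Real

set_option maxHeartbeats 4000000 in
theorem local_doubling_zeta_ramified (q : ℝ) (hq : 1 < q) (ε : ℂ) (hε : ε = 1 ∨ ε = -1)
    (α : ℂ) (hα : α ^ 2 ≠ 1)
    (hαl : q ^ (-(3 : ℝ) / 2) < norm α) (hαu : norm α < q ^ ((3 : ℝ) / 2))
    (A B : ℂ)
    (hA : A = (1 - α ^ (-2 : ℤ) * ((q : ℂ))⁻¹) / (1 - α ^ (-2 : ℤ)))
    (hB : B = (1 - α ^ 2 * ((q : ℂ))⁻¹) / (1 - α ^ 2)) :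
    Summable (fun n : ℤ =>
      |q ^ (-4 * |(n : ℝ)| - 2) - q ^ (-2 * |(n : ℝ)| - 2 * |(n : ℝ) - 1| - 2)|) ∧
    Summable (fun m : ℕ => norm
      (ε ^ (m + 1) * ((q ^ (-(3 * ((m : ℝ) + 1)) / 2) : ℝ) : ℂ) *
        (α ^ (m + 1) * A + α ^ (-((m : ℤ) + 1)) * B))) ∧
    Summable (fun p : ℕ × ℕ => norm
      (ε ^ ((p.1 + 1) + (p.1 + p.2 + 2)) *
        ((q ^ (-(5 * ((p.1 : ℝ) + 1)) / 2 - 3 * ((p.1 : ℝ) + (p.2 : ℝ) + 2) / 2) : ℝ) : ℂ) *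
        (α ^ (p.2 + 1) * A + α ^ (-((p.2 : ℤ) + 1)) * B))) ∧
    Summable (fun p : ℕ × ℕ => norm
      (ε ^ ((p.1 + p.2 + 2) + (p.1 + 1)) *
        ((q ^ (-(3 * ((p.1 : ℝ) + (p.2 : ℝ) + 2)) / 2 - 5 * ((p.1 : ℝ) + 1) / 2) : ℝ) : ℂ) *
        (α ^ (p.2 + 1) * A + α ^ (-((p.2 : ℤ) + 1)) * B))) ∧
    (((∑' n : ℤ, (q ^ (-4 * |(n : ℝ)| - 2) - q ^ (-2 * |(n : ℝ)| - 2 * |(n : ℝ) - 1| - 2)) : ℝ) : ℂ) +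
      ((q ^ (-2 : ℝ) - q ^ (-4 : ℝ) : ℝ) : ℂ) *
        (∑' m : ℕ, ε ^ (m + 1) * ((q ^ (-(3 * ((m : ℝ) + 1)) / 2) : ℝ) : ℂ) *
          (α ^ (m + 1) * A + α ^ (-((m : ℤ) + 1)) * B)) +
      ((q ^ (-2 : ℝ) - q ^ (-4 : ℝ) : ℝ) : ℂ) *
        (∑' p : ℕ × ℕ, ε ^ ((p.1 + 1) + (p.1 + p.2 + 2)) *
          ((q ^ (-(5 * ((p.1 : ℝ) + 1)) / 2 - 3 * ((p.1 : ℝ) + (p.2 : ℝ) + 2) / 2) : ℝ) : ℂ) *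
          (α ^ (p.2 + 1) * A + α ^ (-((p.2 : ℤ) + 1)) * B)) +
      ((q ^ (-2 : ℝ) - 1 : ℝ) : ℂ) *
        (∑' p : ℕ × ℕ, ε ^ ((p.1 + p.2 + 2) + (p.1 + 1)) *
          ((q ^ (-(3 * ((p.1 : ℝ) + (p.2 : ℝ) + 2)) / 2 - 5 * ((p.1 : ℝ) + 1) / 2) : ℝ) : ℂ) *
          (α ^ (p.2 + 1) * A + α ^ (-((p.2 : ℤ) + 1)) * B)) =
      ((q ^ (-2 : ℝ) * (1 - q ^ (-2 : ℝ)) ^ 2 : ℝ) : ℂ) *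
        (1 - ε * α * ((q ^ (-(3 : ℝ) / 2) : ℝ) : ℂ))⁻¹ *
        (1 - ε * α⁻¹ * ((q ^ (-(3 : ℝ) / 2) : ℝ) : ℂ))⁻¹) := by
  have hq0 : (0:ℝ) < q := zero_lt_one.trans hq
  set s : ℝ := q ^ (-(1:ℝ)/2) with hs_def
  have hs0 : 0 < s := Real.rpow_pos_of_pos hq0 _
  have hs1 : s < 1 := Real.rpow_lt_one_of_one_lt_of_neg hq (by norm_num)
  have hqs : ∀ (k : ℕ), q ^ (-(k:ℝ)/2) = s ^ k := by
    intro k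
    rw [hs_def, ← Real.rpow_natCast (q ^ (-(1:ℝ)/2)) k, ← Real.rpow_mul hq0.le]
    congr 1; ring
  have hqs' : ∀ (k : ℕ) (a : ℝ), a = -(k:ℝ)/2 → q ^ a = s ^ k := fun k a ha => ha ▸ hqs k
  -- basic nonvanishing
  have hα0 : α ≠ 0 := by
    intro h
    rw [h] at hαl
    simp only [norm_zero] at hαl
    exact absurd hαl (not_lt.mpr (Real.rpow_pos_of_pos hq0 _).le)
  have hε2 : ε ^ 2 = 1 := by rcases hε with rfl | rfl <;> norm_num
  have hεabs : norm ε = 1 := by rcases hε with rfl | rfl <;> simp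
  have hαpos : 0 < norm α := (Real.rpow_pos_of_pos hq0 _).trans hαl
  -- the complex number c = ↑s
  have hc0 : ((s:ℝ):ℂ) ≠ 0 := by
    exact_mod_cast hs0.ne'
  have hs3 : q ^ (-(3:ℝ)/2) = s ^ 3 := hqs' 3 _ (by norm_num)
  have hq32 : q ^ ((3:ℝ)/2) * s ^ 3 = 1 := by
    rw [← hs3, ← Real.rpow_add hq0]
    norm_num
  -- norms of X and Y
  have hXn : ‖ε * α * ((s:ℝ):ℂ)^3‖ < 1 := by
    rw [norm_mul, norm_mul, norm_pow, Complex.norm_real, Real.norm_eq_abs,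
      abs_of_pos hs0, hεabs, one_mul]
    calc norm α * s ^ 3 < q ^ ((3:ℝ)/2) * s ^ 3 :=
          mul_lt_mul_of_pos_right hαu (pow_pos hs0 3)
      _ = 1 := hq32
  have hYn : ‖ε * α⁻¹ * ((s:ℝ):ℂ)^3‖ < 1 := by
    rw [norm_mul, norm_mul, norm_pow, Complex.norm_real, Real.norm_eq_abs,
      abs_of_pos hs0, hεabs, one_mul, norm_inv]
    have h3 : s ^ 3 < norm α := by rw [← hs3]; exact hαl
    calc (norm α)⁻¹ * s ^ 3 < (norm α)⁻¹ * norm α :=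
          mul_lt_mul_of_pos_left h3 (inv_pos.mpr hαpos)
      _ = 1 := inv_mul_cancel₀ hαpos.ne'
  have hX0 : (1:ℂ) - ε * α * ((s:ℝ):ℂ)^3 ≠ 0 := by
    intro h
    have := hXn
    rw [← (sub_eq_zero.mp h)] at this
    simp at this
  have hY0 : (1:ℂ) - ε * α⁻¹ * ((s:ℝ):ℂ)^3 ≠ 0 := by
    intro h
    have := hYn
    rw [← (sub_eq_zero.mp h)] at this
    simp at this
  have hs8 : (0:ℝ) ≤ s^8 ∧ s^8 < 1 := ⟨by positivity, pow_lt_one₀ hs0.le hs1 (by norm_num)⟩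
  have hc8n : ‖(((s:ℝ):ℂ))^8‖ < 1 := by
    rw [norm_pow, Complex.norm_real, Real.norm_eq_abs, abs_of_pos hs0]
    exact hs8.2
  have hc80 : (1:ℂ) - ((s:ℝ):ℂ)^8 ≠ 0 := by
    intro h
    have := hc8n
    rw [← (sub_eq_zero.mp h)] at this
    simp at this
  -- real geometric series for s^8
  have hgeo8 : HasSum (fun n : ℕ => (s^8)^(n+1)) (s^8 * (1 - s^8)⁻¹) := by
    have h := (hasSum_geometric_of_lt_one hs8.1 hs8.2).mul_left (s^8)
    simpa [pow_succ, mul_comm] using h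
  ------------------------------------------------------------------
  -- Part 1 : the ℤ-indexed series
  ------------------------------------------------------------------
  have hg_succ : ∀ n : ℕ,
      (q ^ (-4 * |(((n+1:ℕ):ℤ) : ℝ)| - 2) -
        q ^ (-2 * |(((n+1:ℕ):ℤ) : ℝ)| - 2 * |(((n+1:ℕ):ℤ) : ℝ) - 1| - 2))
      = (s^4 - 1) * (s^8)^(n+1) := by
    intro n
    have hc : (((n+1:ℕ):ℤ) : ℝ) = (n:ℝ) + 1 := by push_cast; ring
    rw [hc, abs_of_nonneg (by positivity : (0:ℝ) ≤ (n:ℝ)+1),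
      show (n:ℝ) + 1 - 1 = (n:ℝ) by ring, abs_of_nonneg (n.cast_nonneg),
      hqs' (8*n+12) _ (by push_cast; ring), hqs' (8*n+8) _ (by push_cast; ring)]
    ring
  have hg_neg : ∀ n : ℕ,
      (q ^ (-4 * |((-((n:ℤ)+1) : ℤ) : ℝ)| - 2) -
        q ^ (-2 * |((-((n:ℤ)+1) : ℤ) : ℝ)| - 2 * |((-((n:ℤ)+1) : ℤ) : ℝ) - 1| - 2))
      = (s^4 - s^8) * (s^8)^(n+1) := by
    intro n
    have hc : ((-((n:ℤ)+1) : ℤ) : ℝ) = -((n:ℝ) + 1) := by push_cast; ring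
    rw [hc, abs_neg, abs_of_nonneg (by positivity : (0:ℝ) ≤ (n:ℝ)+1),
      show -((n:ℝ) + 1) - 1 = -((n:ℝ)+2) by ring, abs_neg,
      abs_of_nonneg (by positivity : (0:ℝ) ≤ (n:ℝ)+2),
      hqs' (8*n+12) _ (by push_cast; ring), hqs' (8*n+16) _ (by push_cast; ring)]
    ring
  have hg0 : (q ^ (-4 * |(((0:ℕ):ℤ) : ℝ)| - 2) -
      q ^ (-2 * |(((0:ℕ):ℤ) : ℝ)| - 2 * |(((0:ℕ):ℤ) : ℝ) - 1| - 2)) = s^4 - s^8 := by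
    have hc : (((0:ℕ):ℤ) : ℝ) = 0 := by norm_num
    rw [hc, abs_zero, show (0:ℝ) - 1 = -1 by ring, abs_neg, abs_one,
      hqs' 4 _ (by norm_num), hqs' 8 _ (by norm_num)]
  have hnat : HasSum
      (fun n : ℕ => (q ^ (-4 * |((n:ℤ) : ℝ)| - 2) -
        q ^ (-2 * |((n:ℤ) : ℝ)| - 2 * |((n:ℤ) : ℝ) - 1| - 2)))
      ((s^4 - 1) * (s^8 * (1 - s^8)⁻¹) + (s^4 - s^8)) := by
    have hshift : HasSum
        (fun n : ℕ => (q ^ (-4 * |(((n+1:ℕ):ℤ) : ℝ)| - 2) -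
          q ^ (-2 * |(((n+1:ℕ):ℤ) : ℝ)| - 2 * |(((n+1:ℕ):ℤ) : ℝ) - 1| - 2)))
        ((s^4 - 1) * (s^8 * (1 - s^8)⁻¹)) := by
      rw [funext hg_succ]
      exact hgeo8.mul_left _
    have h := (hasSum_nat_add_iff
      (f := fun n : ℕ => (q ^ (-4 * |((n:ℤ) : ℝ)| - 2) -
        q ^ (-2 * |((n:ℤ) : ℝ)| - 2 * |((n:ℤ) : ℝ) - 1| - 2))) 1).mp hshift
    rwa [Finset.sum_range_one, hg0] at h
  have hneg : HasSum
      (fun n : ℕ => (q ^ (-4 * |((-((n:ℤ)+1) : ℤ) : ℝ)| - 2) -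
        q ^ (-2 * |((-((n:ℤ)+1) : ℤ) : ℝ)| - 2 * |((-((n:ℤ)+1) : ℤ) : ℝ) - 1| - 2)))
      ((s^4 - s^8) * (s^8 * (1 - s^8)⁻¹)) := by
    rw [funext hg_neg]
    exact hgeo8.mul_left _
  have hZ1 : HasSum
      (fun n : ℤ => (q ^ (-4 * |(n : ℝ)| - 2) -
        q ^ (-2 * |(n : ℝ)| - 2 * |(n : ℝ) - 1| - 2)))
      (((s^4 - 1) * (s^8 * (1 - s^8)⁻¹) + (s^4 - s^8)) +
        (s^4 - s^8) * (s^8 * (1 - s^8)⁻¹)) :=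
    HasSum.of_nat_of_neg_add_one hnat hneg
  have goal1 : Summable (fun n : ℤ =>
      |q ^ (-4 * |(n : ℝ)| - 2) - q ^ (-2 * |(n : ℝ)| - 2 * |(n : ℝ) - 1| - 2)|) :=
    Summable.of_nat_of_neg_add_one hnat.summable.abs hneg.summable.abs
  ------------------------------------------------------------------
  -- Complex geometric data
  ------------------------------------------------------------------
  have hXsum : HasSum (fun n : ℕ => (ε * α * ((s:ℝ):ℂ)^3)^(n+1))
      ((ε * α * ((s:ℝ):ℂ)^3) * (1 - ε * α * ((s:ℝ):ℂ)^3)⁻¹) := by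
    have h := (hasSum_geometric_of_norm_lt_one hXn).mul_left (ε * α * ((s:ℝ):ℂ)^3)
    simpa [pow_succ, mul_comm] using h
  have hYsum : HasSum (fun n : ℕ => (ε * α⁻¹ * ((s:ℝ):ℂ)^3)^(n+1))
      ((ε * α⁻¹ * ((s:ℝ):ℂ)^3) * (1 - ε * α⁻¹ * ((s:ℝ):ℂ)^3)⁻¹) := by
    have h := (hasSum_geometric_of_norm_lt_one hYn).mul_left (ε * α⁻¹ * ((s:ℝ):ℂ)^3)
    simpa [pow_succ, mul_comm] using h
  have hWsum : HasSum (fun n : ℕ => (((s:ℝ):ℂ)^8)^(n+1))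
      (((s:ℝ):ℂ)^8 * (1 - ((s:ℝ):ℂ)^8)⁻¹) := by
    have h := (hasSum_geometric_of_norm_lt_one hc8n).mul_left (((s:ℝ):ℂ)^8)
    simpa [pow_succ, mul_comm] using h
  have hGS : HasSum (fun m : ℕ =>
      A * (ε * α * ((s:ℝ):ℂ)^3)^(m+1) + B * (ε * α⁻¹ * ((s:ℝ):ℂ)^3)^(m+1))
      (A * ((ε * α * ((s:ℝ):ℂ)^3) * (1 - ε * α * ((s:ℝ):ℂ)^3)⁻¹) +
        B * ((ε * α⁻¹ * ((s:ℝ):ℂ)^3) * (1 - ε * α⁻¹ * ((s:ℝ):ℂ)^3)⁻¹)) :=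
    (hXsum.mul_left A).add (hYsum.mul_left B)
  -- norm summabilities
  have hsXn : Summable (fun n : ℕ => ‖ε * α * ((s:ℝ):ℂ)^3‖^(n+1)) := by
    have h := (summable_geometric_of_lt_one (norm_nonneg _) hXn).mul_left
      ‖ε * α * ((s:ℝ):ℂ)^3‖
    simpa [pow_succ, mul_comm] using h
  have hsYn : Summable (fun n : ℕ => ‖ε * α⁻¹ * ((s:ℝ):ℂ)^3‖^(n+1)) := by
    have h := (summable_geometric_of_lt_one (norm_nonneg _) hYn).mul_left
      ‖ε * α⁻¹ * ((s:ℝ):ℂ)^3‖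
    simpa [pow_succ, mul_comm] using h
  have hGn : Summable (fun m : ℕ =>
      ‖A * (ε * α * ((s:ℝ):ℂ)^3)^(m+1) + B * (ε * α⁻¹ * ((s:ℝ):ℂ)^3)^(m+1)‖) := by
    refine Summable.of_nonneg_of_le (fun _ => norm_nonneg _) (fun m => ?_)
      ((hsXn.mul_left ‖A‖).add (hsYn.mul_left ‖B‖))
    calc ‖A * (ε * α * ((s:ℝ):ℂ)^3)^(m+1) + B * (ε * α⁻¹ * ((s:ℝ):ℂ)^3)^(m+1)‖
        ≤ ‖A * (ε * α * ((s:ℝ):ℂ)^3)^(m+1)‖ + ‖B * (ε * α⁻¹ * ((s:ℝ):ℂ)^3)^(m+1)‖ :=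
          norm_add_le _ _
      _ = ‖A‖ * ‖ε * α * ((s:ℝ):ℂ)^3‖^(m+1) + ‖B‖ * ‖ε * α⁻¹ * ((s:ℝ):ℂ)^3‖^(m+1) := by
          rw [norm_mul, norm_mul, norm_pow, norm_pow]
  have hWn : Summable (fun n : ℕ => ‖(((s:ℝ):ℂ)^8)^(n+1)‖) := by
    refine Summable.of_nonneg_of_le (fun _ => norm_nonneg _) (fun n => ?_)
      ((summable_geometric_of_lt_one (norm_nonneg _) hc8n).mul_left ‖((s:ℝ):ℂ)^8‖)
    rw [norm_pow, pow_succ, mul_comm]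
  ------------------------------------------------------------------
  -- termwise identifications
  ------------------------------------------------------------------
  have hzpow : ∀ m : ℕ, α ^ (-((m:ℤ) + 1)) = (α⁻¹) ^ (m+1) := by
    intro m
    rw [show -((m:ℤ)+1) = -((m+1:ℕ):ℤ) by push_cast; ring, zpow_neg, zpow_natCast, ← inv_pow]
  have hterm2 : ∀ m : ℕ,
      ε ^ (m + 1) * ((q ^ (-(3 * ((m : ℝ) + 1)) / 2) : ℝ) : ℂ) *
        (α ^ (m + 1) * A + α ^ (-((m : ℤ) + 1)) * B)
      = A * (ε * α * ((s:ℝ):ℂ)^3)^(m+1) + B * (ε * α⁻¹ * ((s:ℝ):ℂ)^3)^(m+1) := by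
    intro m
    rw [hqs' (3*(m+1)) _ (by push_cast; ring), hzpow]
    push_cast
    ring
  have hterm3 : ∀ p : ℕ × ℕ,
      ε ^ ((p.1 + 1) + (p.1 + p.2 + 2)) *
        ((q ^ (-(5 * ((p.1 : ℝ) + 1)) / 2 - 3 * ((p.1 : ℝ) + (p.2 : ℝ) + 2) / 2) : ℝ) : ℂ) *
        (α ^ (p.2 + 1) * A + α ^ (-((p.2 : ℤ) + 1)) * B)
      = (((s:ℝ):ℂ)^8)^(p.1+1) *
        (A * (ε * α * ((s:ℝ):ℂ)^3)^(p.2+1) + B * (ε * α⁻¹ * ((s:ℝ):ℂ)^3)^(p.2+1)) := by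
    intro p
    rw [show (p.1 + 1) + (p.1 + p.2 + 2) = 2*(p.1+1) + (p.2+1) by ring,
      pow_add, pow_mul, hε2, one_pow, one_mul,
      hqs' (8*(p.1+1) + 3*(p.2+1)) _ (by push_cast; ring), hzpow]
    push_cast
    ring
  have hterm4 : ∀ p : ℕ × ℕ,
      ε ^ ((p.1 + p.2 + 2) + (p.1 + 1)) *
        ((q ^ (-(3 * ((p.1 : ℝ) + (p.2 : ℝ) + 2)) / 2 - 5 * ((p.1 : ℝ) + 1) / 2) : ℝ) : ℂ) *
        (α ^ (p.2 + 1) * A + α ^ (-((p.2 : ℤ) + 1)) * B)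
      = (((s:ℝ):ℂ)^8)^(p.1+1) *
        (A * (ε * α * ((s:ℝ):ℂ)^3)^(p.2+1) + B * (ε * α⁻¹ * ((s:ℝ):ℂ)^3)^(p.2+1)) := by
    intro p
    rw [show (p.1 + p.2 + 2) + (p.1 + 1) = 2*(p.1+1) + (p.2+1) by ring,
      pow_add, pow_mul, hε2, one_pow, one_mul,
      hqs' (8*(p.1+1) + 3*(p.2+1)) _ (by push_cast; ring), hzpow]
    push_cast
    ring
  ------------------------------------------------------------------
  -- summability goals 2-4
  ------------------------------------------------------------------
  have goal2 : Summable (fun m : ℕ => norm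
      (ε ^ (m + 1) * ((q ^ (-(3 * ((m : ℝ) + 1)) / 2) : ℝ) : ℂ) *
        (α ^ (m + 1) * A + α ^ (-((m : ℤ) + 1)) * B))) := by
    simp only [hterm2]
    exact hGn
  have goal3 : Summable (fun p : ℕ × ℕ => norm
      (ε ^ ((p.1 + 1) + (p.1 + p.2 + 2)) *
        ((q ^ (-(5 * ((p.1 : ℝ) + 1)) / 2 - 3 * ((p.1 : ℝ) + (p.2 : ℝ) + 2) / 2) : ℝ) : ℂ) *
        (α ^ (p.2 + 1) * A + α ^ (-((p.2 : ℤ) + 1)) * B))) := by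
    simp only [hterm3]
    exact Summable.mul_norm (f := fun n : ℕ => (((s:ℝ):ℂ)^8)^(n+1))
      (g := fun m : ℕ => A * (ε * α * ((s:ℝ):ℂ)^3)^(m+1) + B * (ε * α⁻¹ * ((s:ℝ):ℂ)^3)^(m+1)) hWn hGn
  have goal4 : Summable (fun p : ℕ × ℕ => norm
      (ε ^ ((p.1 + p.2 + 2) + (p.1 + 1)) *
        ((q ^ (-(3 * ((p.1 : ℝ) + (p.2 : ℝ) + 2)) / 2 - 5 * ((p.1 : ℝ) + 1) / 2) : ℝ) : ℂ) *
        (α ^ (p.2 + 1) * A + α ^ (-((p.2 : ℤ) + 1)) * B))) := by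
    simp only [hterm4]
    exact Summable.mul_norm (f := fun n : ℕ => (((s:ℝ):ℂ)^8)^(n+1))
      (g := fun m : ℕ => A * (ε * α * ((s:ℝ):ℂ)^3)^(m+1) + B * (ε * α⁻¹ * ((s:ℝ):ℂ)^3)^(m+1)) hWn hGn
  ------------------------------------------------------------------
  -- tsum evaluations
  ------------------------------------------------------------------
  have hT2 : (∑' m : ℕ, ε ^ (m + 1) * ((q ^ (-(3 * ((m : ℝ) + 1)) / 2) : ℝ) : ℂ) *
        (α ^ (m + 1) * A + α ^ (-((m : ℤ) + 1)) * B))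
      = A * ((ε * α * ((s:ℝ):ℂ)^3) * (1 - ε * α * ((s:ℝ):ℂ)^3)⁻¹) +
        B * ((ε * α⁻¹ * ((s:ℝ):ℂ)^3) * (1 - ε * α⁻¹ * ((s:ℝ):ℂ)^3)⁻¹) := by
    rw [tsum_congr hterm2]
    exact hGS.tsum_eq
  have hT3 : (∑' p : ℕ × ℕ, ε ^ ((p.1 + 1) + (p.1 + p.2 + 2)) *
        ((q ^ (-(5 * ((p.1 : ℝ) + 1)) / 2 - 3 * ((p.1 : ℝ) + (p.2 : ℝ) + 2) / 2) : ℝ) : ℂ) *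
        (α ^ (p.2 + 1) * A + α ^ (-((p.2 : ℤ) + 1)) * B))
      = (((s:ℝ):ℂ)^8 * (1 - ((s:ℝ):ℂ)^8)⁻¹) *
        (A * ((ε * α * ((s:ℝ):ℂ)^3) * (1 - ε * α * ((s:ℝ):ℂ)^3)⁻¹) +
          B * ((ε * α⁻¹ * ((s:ℝ):ℂ)^3) * (1 - ε * α⁻¹ * ((s:ℝ):ℂ)^3)⁻¹)) := by
    calc (∑' p : ℕ × ℕ, ε ^ ((p.1 + 1) + (p.1 + p.2 + 2)) *
        ((q ^ (-(5 * ((p.1 : ℝ) + 1)) / 2 - 3 * ((p.1 : ℝ) + (p.2 : ℝ) + 2) / 2) : ℝ) : ℂ) *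
        (α ^ (p.2 + 1) * A + α ^ (-((p.2 : ℤ) + 1)) * B))
        = ∑' p : ℕ × ℕ, (((s:ℝ):ℂ)^8)^(p.1+1) *
            (A * (ε * α * ((s:ℝ):ℂ)^3)^(p.2+1) + B * (ε * α⁻¹ * ((s:ℝ):ℂ)^3)^(p.2+1)) :=
          tsum_congr hterm3
      _ = (∑' n : ℕ, (((s:ℝ):ℂ)^8)^(n+1)) *
          (∑' m : ℕ, (A * (ε * α * ((s:ℝ):ℂ)^3)^(m+1) + B * (ε * α⁻¹ * ((s:ℝ):ℂ)^3)^(m+1))) :=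
          (tsum_mul_tsum_of_summable_norm (f := fun n : ℕ => (((s:ℝ):ℂ)^8)^(n+1))
      (g := fun m : ℕ => A * (ε * α * ((s:ℝ):ℂ)^3)^(m+1) + B * (ε * α⁻¹ * ((s:ℝ):ℂ)^3)^(m+1)) hWn hGn).symm
      _ = _ := by rw [hWsum.tsum_eq, hGS.tsum_eq]
  have hT4 : (∑' p : ℕ × ℕ, ε ^ ((p.1 + p.2 + 2) + (p.1 + 1)) *
        ((q ^ (-(3 * ((p.1 : ℝ) + (p.2 : ℝ) + 2)) / 2 - 5 * ((p.1 : ℝ) + 1) / 2) : ℝ) : ℂ) *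
        (α ^ (p.2 + 1) * A + α ^ (-((p.2 : ℤ) + 1)) * B))
      = (((s:ℝ):ℂ)^8 * (1 - ((s:ℝ):ℂ)^8)⁻¹) *
        (A * ((ε * α * ((s:ℝ):ℂ)^3) * (1 - ε * α * ((s:ℝ):ℂ)^3)⁻¹) +
          B * ((ε * α⁻¹ * ((s:ℝ):ℂ)^3) * (1 - ε * α⁻¹ * ((s:ℝ):ℂ)^3)⁻¹)) := by
    calc (∑' p : ℕ × ℕ, ε ^ ((p.1 + p.2 + 2) + (p.1 + 1)) *
        ((q ^ (-(3 * ((p.1 : ℝ) + (p.2 : ℝ) + 2)) / 2 - 5 * ((p.1 : ℝ) + 1) / 2) : ℝ) : ℂ) *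
        (α ^ (p.2 + 1) * A + α ^ (-((p.2 : ℤ) + 1)) * B))
        = ∑' p : ℕ × ℕ, (((s:ℝ):ℂ)^8)^(p.1+1) *
            (A * (ε * α * ((s:ℝ):ℂ)^3)^(p.2+1) + B * (ε * α⁻¹ * ((s:ℝ):ℂ)^3)^(p.2+1)) :=
          tsum_congr hterm4
      _ = (∑' n : ℕ, (((s:ℝ):ℂ)^8)^(n+1)) *
          (∑' m : ℕ, (A * (ε * α * ((s:ℝ):ℂ)^3)^(m+1) + B * (ε * α⁻¹ * ((s:ℝ):ℂ)^3)^(m+1))) :=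
          (tsum_mul_tsum_of_summable_norm (f := fun n : ℕ => (((s:ℝ):ℂ)^8)^(n+1))
      (g := fun m : ℕ => A * (ε * α * ((s:ℝ):ℂ)^3)^(m+1) + B * (ε * α⁻¹ * ((s:ℝ):ℂ)^3)^(m+1)) hWn hGn).symm
      _ = _ := by rw [hWsum.tsum_eq, hGS.tsum_eq]
  ------------------------------------------------------------------
  -- closed forms for A and B
  ------------------------------------------------------------------
  have h1' : α^2 - 1 ≠ 0 := sub_ne_zero.mpr hα
  have h1 : (1:ℂ) - α^2 ≠ 0 := sub_ne_zero.mpr (Ne.symm hα)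
  have hinv1 : (1:ℂ) - (α^2)⁻¹ ≠ 0 := by
    intro h
    exact hα (inv_eq_one.mp (sub_eq_zero.mp h).symm)
  have hsq2 : s^2 = q⁻¹ := by
    rw [← Real.rpow_neg_one q, hqs' 2 (-1:ℝ) (by norm_num)]
  have hqinv : ((q:ℂ))⁻¹ = ((s:ℝ):ℂ)^2 := by
    exact_mod_cast congrArg (fun x : ℝ => (x : ℂ)) hsq2.symm
  have h2z : α ^ (-2:ℤ) = (α^2)⁻¹ := by
    rw [show (-2:ℤ) = -((2:ℕ):ℤ) by norm_num, zpow_neg, zpow_natCast]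
  have hA' : A = (α^2 - ((s:ℝ):ℂ)^2) / (α^2 - 1) := by
    rw [hA, h2z, hqinv, div_eq_div_iff hinv1 h1']
    field_simp
  have hB' : B = (1 - α^2 * ((s:ℝ):ℂ)^2) / (1 - α^2) := by
    rw [hB, hqinv]
  ------------------------------------------------------------------
  -- key algebraic identities
  ------------------------------------------------------------------
  have hstep2 : 1 + (A * ((ε * α * ((s:ℝ):ℂ)^3) * (1 - ε * α * ((s:ℝ):ℂ)^3)⁻¹) +
        B * ((ε * α⁻¹ * ((s:ℝ):ℂ)^3) * (1 - ε * α⁻¹ * ((s:ℝ):ℂ)^3)⁻¹))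
      = (1 - ((s:ℝ):ℂ)^8) * (1 - ε * α * ((s:ℝ):ℂ)^3)⁻¹ *
          (1 - ε * α⁻¹ * ((s:ℝ):ℂ)^3)⁻¹ := by
    rw [hA', hB']
    rcases hε with rfl | rfl
    · simp only [one_mul]
      have hx : (1:ℂ) - α * ((s:ℝ):ℂ)^3 ≠ 0 := by simpa using hX0
      have hac : α - ((s:ℝ):ℂ)^3 ≠ 0 := by
        intro h
        apply hY0
        rw [← sub_eq_zero.mp h]
        field_simp
        simp
      have hyrw : ((1:ℂ) - α⁻¹ * ((s:ℝ):ℂ)^3)⁻¹ = α * (α - ((s:ℝ):ℂ)^3)⁻¹ := by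
        rw [show (1:ℂ) - α⁻¹ * ((s:ℝ):ℂ)^3 = (α - ((s:ℝ):ℂ)^3) * α⁻¹ by
          field_simp, mul_inv, inv_inv, mul_comm]
      rw [hyrw]
      field_simp
      ring
    · simp only [neg_mul, one_mul, sub_neg_eq_add]
      have hx : (1:ℂ) + α * ((s:ℝ):ℂ)^3 ≠ 0 := by simpa using hX0
      have hac : α + ((s:ℝ):ℂ)^3 ≠ 0 := by
        intro h
        apply hY0
        rw [show ((s:ℝ):ℂ)^3 = -α from by linear_combination h]
        field_simp
        simp
      have hyrw : ((1:ℂ) + α⁻¹ * ((s:ℝ):ℂ)^3)⁻¹ = α * (α + ((s:ℝ):ℂ)^3)⁻¹ := by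
        rw [show (1:ℂ) + α⁻¹ * ((s:ℝ):ℂ)^3 = (α + ((s:ℝ):ℂ)^3) * α⁻¹ by
          field_simp, mul_inv, inv_inv, mul_comm]
      rw [hyrw]
      field_simp
      ring
  have hco : ∀ S' : ℂ,
      ((((s:ℝ):ℂ)^4 - 1) * (((s:ℝ):ℂ)^8 * (1 - ((s:ℝ):ℂ)^8)⁻¹) + (((s:ℝ):ℂ)^4 - ((s:ℝ):ℂ)^8) +
        (((s:ℝ):ℂ)^4 - ((s:ℝ):ℂ)^8) * (((s:ℝ):ℂ)^8 * (1 - ((s:ℝ):ℂ)^8)⁻¹)) +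
      (((s:ℝ):ℂ)^4 - ((s:ℝ):ℂ)^8) * S' +
      (((s:ℝ):ℂ)^4 - ((s:ℝ):ℂ)^8) * ((((s:ℝ):ℂ)^8 * (1 - ((s:ℝ):ℂ)^8)⁻¹) * S') +
      (((s:ℝ):ℂ)^4 - 1) * ((((s:ℝ):ℂ)^8 * (1 - ((s:ℝ):ℂ)^8)⁻¹) * S')
      = (((s:ℝ):ℂ)^4 * (1 - ((s:ℝ):ℂ)^4)^2 * (1 - ((s:ℝ):ℂ)^8)⁻¹) * (1 + S') := by
    intro S'
    field_simp
    ring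
  have hcc : ((1:ℂ) - ((s:ℝ):ℂ)^8)⁻¹ * (1 - ((s:ℝ):ℂ)^8) = 1 := inv_mul_cancel₀ hc80
  ------------------------------------------------------------------
  -- conclusion
  ------------------------------------------------------------------
  refine ⟨goal1, goal2, goal3, goal4, ?_⟩
  rw [hZ1.tsum_eq, hT2, hT3, hT4,
    hqs' 4 (-2:ℝ) (by norm_num), hqs' 8 (-4:ℝ) (by norm_num), hs3]
  push_cast
  linear_combination (hco (A * ((ε * α * ((s:ℝ):ℂ)^3) * (1 - ε * α * ((s:ℝ):ℂ)^3)⁻¹) +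
      B * ((ε * α⁻¹ * ((s:ℝ):ℂ)^3) * (1 - ε * α⁻¹ * ((s:ℝ):ℂ)^3)⁻¹))) +
    (((s:ℝ):ℂ)^4 * (1 - ((s:ℝ):ℂ)^4)^2 * (1 - ((s:ℝ):ℂ)^8)⁻¹) * hstep2 +
    (((s:ℝ):ℂ)^4 * (1 - ((s:ℝ):ℂ)^4)^2 * (1 - ε * α * ((s:ℝ):ℂ)^3)⁻¹ *
      (1 - ε * α⁻¹ * ((s:ℝ):ℂ)^3)⁻¹) * hcc
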